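/- Let 𝔉 be a clonable family of r-graphs. For every ε>0 there exist δ>0 and n0 such that the following holds: for every F ∈ 𝔉 with v(F)=n ≥ n0 and |F| ≥ (m(𝔉) − δ)·n^r, there exists X ⊆ V(F) with |X| ≥ (1−ε)n such that | |L_F(v)| − r·m(𝔉)·n^{r-1} | ≤ ε·n^{r-1} for every v ∈ X. -/

import Mathlib

open Filter

namespace TuranGT

/-- An `r`-graph: an `r`-uniform hypergraph with vertex set `{0, ..., n-1} ⊆ ℕ`. -/
structure RGraph (r : ℕ) where
  n : ℕ
  edges : Finset (Finset ℕ)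
  uniform : ∀ e ∈ edges, e.card = r
  valid : ∀ e ∈ edges, ∀ v ∈ e, v < n

variable {r : ℕ}

/-- The link of a vertex `v`: the set of `(r-1)`-sets `I` with `I ∪ {v}` an edge. -/
def link (F : RGraph r) (v : ℕ) : Finset (Finset ℕ) :=
  (F.edges.filter fun e => v ∈ e).image fun e => e.erase v

/-- `G` contains a copy of `H` as a subgraph. -/
def ContainsCopy (G H : RGraph r) : Prop :=
  ∃ f : ℕ → ℕ, Set.InjOn f (Set.Iio H.n) ∧ (∀ v < H.n, f v < G.n) ∧
    ∀ e ∈ H.edges, e.image f ∈ G.edges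

/-- `G` is `𝔉`-free: it contains no member of `𝔉` as a subgraph. -/
def FreeFam (𝔉 : Set (RGraph r)) (G : RGraph r) : Prop :=
  ∀ H ∈ 𝔉, ¬ ContainsCopy G H

/-- The Turán number `ex(n, 𝔉)`. -/
noncomputable def exNum (r n : ℕ) (𝔉 : Set (RGraph r)) : ℕ :=
  sSup {k | ∃ G : RGraph r, G.n = n ∧ FreeFam 𝔉 G ∧ G.edges.card = k}

/-- `φ` witnesses that `G` is a blowup of `F`: fibers of `φ` form a blowup partition. -/
def IsBlowupMap (F G : RGraph r) (φ : ℕ → ℕ) : Prop :=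
  (∀ v < G.n, φ v < F.n) ∧
    ∀ e : Finset ℕ, e ∈ G.edges ↔
      ((∀ v ∈ e, v < G.n) ∧ Set.InjOn φ (e : Set ℕ) ∧ e.image φ ∈ F.edges)

/-- `G` is (isomorphic to) a blowup of `F` (cloning and deleting vertices). -/
def IsBlowup (F G : RGraph r) : Prop := ∃ φ : ℕ → ℕ, IsBlowupMap F G φ

/-- The family `𝔅(S)` of all blowups of `S`. -/
def blowupFam (S : RGraph r) : Set (RGraph r) := {G | IsBlowup S G}

/-- A family is clonable if it is closed under taking blowups. -/
def Clonable (𝔉 : Set (RGraph r)) : Prop :=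
  ∀ F ∈ 𝔉, ∀ G : RGraph r, IsBlowup F G → G ∈ 𝔉

/-- `m(𝔉, n)`: maximum number of edges of an `n`-vertex member of `𝔉`. -/
noncomputable def mFam (𝔉 : Set (RGraph r)) (n : ℕ) : ℕ :=
  sSup {k | ∃ F ∈ 𝔉, F.n = n ∧ F.edges.card = k}

/-- `m(𝔉) = lim_{n → ∞} m(𝔉, n)/n^r` (when the family is smooth). -/
noncomputable def mDen (𝔉 : Set (RGraph r)) : ℝ :=
  limUnder atTop fun n : ℕ => (mFam 𝔉 n : ℝ) / (n : ℝ) ^ r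

/-- The edit distance `d_𝔥(F)` from `F` to the family `𝔥`. -/
noncomputable def distFam (𝔥 : Set (RGraph r)) (F : RGraph r) : ℝ :=
  sInf {x : ℝ | ∃ H ∈ 𝔥, H.n = F.n ∧ x = ((symmDiff F.edges H.edges).card : ℝ)}

/-- `μ` is a probability distribution on the vertex set of `F`. -/
def IsWeight (F : RGraph r) (μ : ℕ → ℝ) : Prop :=
  (∀ v, 0 ≤ μ v) ∧ (∀ v, F.n ≤ v → μ v = 0) ∧ ∑ v ∈ Finset.range F.n, μ v = 1

/-- Weighted density `λ(F, μ)`. -/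
noncomputable def lamW (F : RGraph r) (μ : ℕ → ℝ) : ℝ :=
  ∑ e ∈ F.edges, ∏ v ∈ e, μ v

/-- The Lagrangian `λ(F)`. -/
noncomputable def lagrangian (F : RGraph r) : ℝ :=
  sSup {x : ℝ | ∃ μ, IsWeight F μ ∧ x = lamW F μ}

/-- `λ(𝔥)` for a family of r-graphs. -/
noncomputable def lamFam (𝔥 : Set (RGraph r)) : ℝ :=
  sSup {x : ℝ | ∃ H ∈ 𝔥, ∃ μ, IsWeight H μ ∧ x = lamW H μ}

/-- The uniform distribution `ξ_F`. -/
noncomputable def uniformW (F : RGraph r) : ℕ → ℝ :=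
  fun v => if v < F.n then ((F.n : ℝ))⁻¹ else 0

/-- `(G, ν)` is a blowup of the weighted graph `(F, μ)`. -/
def WIsBlowup (F : RGraph r) (μ : ℕ → ℝ) (G : RGraph r) (ν : ℕ → ℝ) : Prop :=
  IsWeight G ν ∧ ∃ φ : ℕ → ℕ, IsBlowupMap F G φ ∧
    ∀ i < F.n, μ i = ∑ v ∈ (Finset.range G.n).filter (fun v => φ v = i), ν v

/-- `d'(F1, F2, μ)` for graphs on a common vertex set. -/
noncomputable def dPrime (E1 E2 : Finset (Finset ℕ)) (μ : ℕ → ℝ) : ℝ :=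
  ∑ e ∈ symmDiff E1 E2, ∏ v ∈ e, μ v

/-- The distance between weighted `r`-graphs. -/
noncomputable def wDist (F1 : RGraph r) (μ1 : ℕ → ℝ) (F2 : RGraph r) (μ2 : ℕ → ℝ) : ℝ :=
  sInf {x : ℝ | ∃ (G1 G2 : RGraph r) (ν : ℕ → ℝ), G1.n = G2.n ∧
    WIsBlowup F1 μ1 G1 ν ∧ WIsBlowup F2 μ2 G2 ν ∧ x = dPrime G1.edges G2.edges ν}

/-- The weighted distance `d^w_𝔥(F, μ)` from a weighted graph to a family. -/
noncomputable def wDistFam (𝔥 : Set (RGraph r)) (F : RGraph r) (μ : ℕ → ℝ) : ℝ :=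
  sInf {x : ℝ | ∃ H ∈ 𝔥, ∃ ν, IsWeight H ν ∧ x = wDist F μ H ν}

/-- `𝔉` is `(𝔥, ε, α)`-locally stable. -/
def LocallyStable (𝔉 𝔥 : Set (RGraph r)) (ε α : ℝ) : Prop :=
  ∃ n0 : ℕ, ∀ F ∈ 𝔉, n0 ≤ F.n → distFam 𝔥 F ≤ ε * (F.n : ℝ) ^ r →
    (F.edges.card : ℝ) ≤ (mFam 𝔥 F.n : ℝ) - α * distFam 𝔥 F

/-- `𝔉` is `𝔥`-locally stable. -/
def HLocallyStable (𝔉 𝔥 : Set (RGraph r)) : Prop :=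
  ∃ ε > (0 : ℝ), ∃ α > (0 : ℝ), LocallyStable 𝔉 𝔥 ε α

/-- `𝔉` is `𝔥`-stable, i.e. `(𝔥, 1, α)`-locally stable for some `α > 0`. -/
def HStable (𝔉 𝔥 : Set (RGraph r)) : Prop :=
  ∃ α > (0 : ℝ), LocallyStable 𝔉 𝔥 1 α

/-- `𝔉` is `(𝔥, ε, α)`-vertex locally stable. -/
def VertexLocallyStable (𝔉 𝔥 : Set (RGraph r)) (ε α : ℝ) : Prop :=
  ∃ n0 : ℕ, ∀ F ∈ 𝔉, n0 ≤ F.n → distFam 𝔥 F ≤ ε * (F.n : ℝ) ^ r →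
    (∀ v < F.n, ((r : ℝ) * mDen 𝔥 - ε) * (F.n : ℝ) ^ (r - 1) ≤ ((link F v).card : ℝ)) →
    (F.edges.card : ℝ) ≤ (mFam 𝔥 F.n : ℝ) - α * distFam 𝔥 F

/-- `𝔉` is `𝔥`-vertex locally stable. -/
def HVertexLocallyStable (𝔉 𝔥 : Set (RGraph r)) : Prop :=
  ∃ ε > (0 : ℝ), ∃ α > (0 : ℝ), VertexLocallyStable 𝔉 𝔥 ε α

/-- `𝔉` is `(𝔥, ε, α)`-weight locally stable. -/
def WeightLocallyStable (𝔉 𝔥 : Set (RGraph r)) (ε α : ℝ) : Prop :=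
  ∀ F ∈ 𝔉, ∀ μ : ℕ → ℝ, IsWeight F μ → wDistFam 𝔥 F μ ≤ ε →
    lamW F μ ≤ lamFam 𝔥 - α * wDistFam 𝔥 F μ

/-- `𝔉` is `𝔥`-weight locally stable. -/
def HWeightLocallyStable (𝔉 𝔥 : Set (RGraph r)) : Prop :=
  ∃ ε > (0 : ℝ), ∃ α > (0 : ℝ), WeightLocallyStable 𝔉 𝔥 ε α

/-- `𝔉` is `𝔥`-weight stable: `(𝔥, 1, α)`-weight locally stable for some `α > 0`. -/
def HWeightStable (𝔉 𝔥 : Set (RGraph r)) : Prop :=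
  ∃ α > (0 : ℝ), WeightLocallyStable 𝔉 𝔥 1 α

/-- `𝔉` is `𝔥`-weakly weight stable. -/
def WeaklyWeightStable (𝔉 𝔥 : Set (RGraph r)) : Prop :=
  ∀ ε > (0 : ℝ), ∃ δ > (0 : ℝ), ∀ F ∈ 𝔉, ∀ μ : ℕ → ℝ, IsWeight F μ →
    lamFam 𝔥 - δ ≤ lamW F μ → wDistFam 𝔥 F μ ≤ ε

/-- The generalized triangle `T_r` on vertex set `{0, ..., 2r-2}` (for `r ≥ 2`),
with edges `D1 = {0,...,r-1}`, `D2 = {0,...,r-2} ∪ {r}`, `D3 = {r-1, r, ..., 2r-2}`. -/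
def genTriangle (r : ℕ) : RGraph r where
  n := 2 * r - 1
  edges :=
    if _h : 2 ≤ r then
      {Finset.range r, insert r (Finset.range (r - 1)), Finset.Ico (r - 1) (2 * r - 1)}
    else ∅
  uniform := by
    intro e he
    split_ifs at he with h
    · simp only [Finset.mem_insert, Finset.mem_singleton] at he
      rcases he with rfl | rfl | rfl
      · exact Finset.card_range r
      · rw [Finset.card_insert_of_notMem (by simp only [Finset.mem_range]; omega),
          Finset.card_range]
        omega
      · rw [Nat.card_Ico]
        omega
    · simp at he
  valid := by
    intro e he v hv
    split_ifs at he with h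
    · simp only [Finset.mem_insert, Finset.mem_singleton] at he
      rcases he with rfl | rfl | rfl
      · simp only [Finset.mem_range] at hv; omega
      · simp only [Finset.mem_insert, Finset.mem_range] at hv; omega
      · simp only [Finset.mem_Ico] at hv; omega
    · simp at he

/-- The family `Σ_r`: all `r`-graphs with three edges `D1, D2, D3` such that
`|D1 ∩ D2| = r - 1` and `D1 △ D2 ⊆ D3`. -/
def SigmaFam (r : ℕ) : Set (RGraph r) :=
  {G | ∃ D1 D2 D3 : Finset ℕ, G.edges = {D1, D2, D3} ∧
    D1 ≠ D2 ∧ D1 ≠ D3 ∧ D2 ≠ D3 ∧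
    (D1 ∩ D2).card = r - 1 ∧ symmDiff D1 D2 ⊆ D3}

/-- The complete graph `K_t` as a `2`-graph. -/
def completeGraph (t : ℕ) : RGraph 2 where
  n := t
  edges := Finset.powersetCard 2 (Finset.range t)
  uniform := fun _e he => (Finset.mem_powersetCard.1 he).2
  valid := fun _e he v hv => Finset.mem_range.1 ((Finset.mem_powersetCard.1 he).1 hv)

/-- `S` is an `(m, r, r-1)` Steiner system: each `(r-1)`-subset of the vertex set
lies in exactly one edge. -/
def IsSteiner (m : ℕ) (S : RGraph r) : Prop :=
  S.n = m ∧ ∀ I : Finset ℕ, (∀ v ∈ I, v < S.n) → I.card = r - 1 →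
    ∃! e, e ∈ S.edges ∧ I ⊆ e

/-- `F` covers pairs: every two vertices lie in a common edge. -/
def CoversPairs (F : RGraph r) : Prop :=
  ∀ u < F.n, ∀ v < F.n, ∃ e ∈ F.edges, u ∈ e ∧ v ∈ e

/-- Isomorphism of `r`-graphs. -/
def Isomorphic (F G : RGraph r) : Prop :=
  F.n = G.n ∧ ∃ f : ℕ → ℕ, Set.InjOn f (Set.Iio F.n) ∧ (∀ v < F.n, f v < G.n) ∧
    ∀ e : Finset ℕ, e ∈ F.edges ↔ ((∀ v ∈ e, v < F.n) ∧ e.image f ∈ G.edges)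

/-- The support of a weighting. -/
noncomputable def suppW (F : RGraph r) (μ : ℕ → ℝ) : Finset ℕ :=
  (Finset.range F.n).filter fun v => μ v ≠ 0

/-- `G` is isomorphic to the subgraph of `F` induced on the vertex set `S`. -/
def IsIsoInduced (F : RGraph r) (S : Finset ℕ) (G : RGraph r) : Prop :=
  ∃ f : ℕ → ℕ, Set.InjOn f (Set.Iio G.n) ∧ (Finset.range G.n).image f = S ∧
    ∀ e : Finset ℕ, e ∈ G.edges ↔ ((∀ v ∈ e, v < G.n) ∧ e.image f ∈ F.edges)

/-- An `r`-graph is thin if every `(r-1)`-set lies in at most one edge. -/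
def ThinG (F : RGraph r) : Prop :=
  ∀ I : Finset ℕ, I.card = r - 1 → ∀ e1 ∈ F.edges, ∀ e2 ∈ F.edges,
    I ⊆ e1 → I ⊆ e2 → e1 = e2

/-- A Steiner system (or any graph) is balanced if its Lagrangian is attained by
the uniform distribution. -/
def Balanced (F : RGraph r) : Prop := lagrangian F = lamW F (uniformW F)

/-- `e(m, r) = C(m, r-1) / (r m^r)`. -/
noncomputable def eDen (m r : ℕ) : ℝ :=
  (m.choose (r - 1) : ℝ) / ((r : ℝ) * (m : ℝ) ^ r)

/-- `d(m, r) = C(m-1, r-2) / ((r-1) m^{r-1})`. -/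
noncomputable def dDen (m r : ℕ) : ℝ :=
  ((m - 1).choose (r - 2) : ℝ) / (((r : ℝ) - 1) * (m : ℝ) ^ (r - 1))

/-- `S` is uniquely dense around `Σ_r`: the uniform weighting of `S` strictly maximizes the
weighted density among weighted `Σ_r`-free `r`-graphs covering pairs. -/
def UniquelyDense (S : RGraph r) : Prop :=
  (∀ F : RGraph r, FreeFam (SigmaFam r) F → CoversPairs F → ∀ μ : ℕ → ℝ, IsWeight F μ →
    lamW F μ ≤ lamW S (uniformW S)) ∧
  ∀ F : RGraph r, FreeFam (SigmaFam r) F → CoversPairs F → ∀ μ : ℕ → ℝ, IsWeight F μ →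
    lamW F μ = lamW S (uniformW S) → Isomorphic F S ∧ μ = uniformW F

-- ===================== auxiliary development =====================

private lemma linkCard_eq (F : RGraph r) (v : ℕ) :
    (link F v).card = (F.edges.filter fun e => v ∈ e).card := by
  classical
  apply Finset.card_image_of_injOn
  intro e he e' he' h
  simp only [Finset.mem_coe, Finset.mem_filter] at he he'
  rw [← Finset.insert_erase he.2, show e.erase v = e'.erase v from h,
    Finset.insert_erase he'.2]

private lemma sum_linkCard (F : RGraph r) :
    ∑ v ∈ Finset.range F.n, (link F v).card = r * F.edges.card := by
  classical
  have h1 : ∀ v, (link F v).card = ∑ e ∈ F.edges, if v ∈ e then 1 else 0 := by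
    intro v; rw [linkCard_eq, Finset.card_filter]
  calc ∑ v ∈ Finset.range F.n, (link F v).card
      = ∑ v ∈ Finset.range F.n, ∑ e ∈ F.edges, if v ∈ e then 1 else 0 :=
        Finset.sum_congr rfl fun v _ => h1 v
    _ = ∑ e ∈ F.edges, ∑ v ∈ Finset.range F.n, if v ∈ e then 1 else 0 := Finset.sum_comm
    _ = ∑ e ∈ F.edges, r := by
        refine Finset.sum_congr rfl fun e he => ?_
        rw [← Finset.card_filter]
        have h2 : (Finset.range F.n).filter (fun v => v ∈ e) = e := by
          ext w
          simp only [Finset.mem_filter, Finset.mem_range]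
          exact ⟨fun h => h.2, fun h => ⟨F.valid e he w h, h⟩⟩
        rw [h2, F.uniform e he]
    _ = r * F.edges.card := by rw [Finset.sum_const, smul_eq_mul, mul_comm]

private lemma edges_card_le (F : RGraph r) : F.edges.card ≤ F.n.choose r := by
  classical
  have hsub : F.edges ⊆ (Finset.range F.n).powersetCard r := by
    intro e he
    rw [Finset.mem_powersetCard]
    exact ⟨fun v hv => Finset.mem_range.2 (F.valid e he v hv), F.uniform e he⟩
  calc F.edges.card ≤ _ := Finset.card_le_card hsub
    _ = F.n.choose r := by rw [Finset.card_powersetCard, Finset.card_range]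

private lemma mFam_bdd (𝔉 : Set (RGraph r)) (n : ℕ) :
    BddAbove {k | ∃ F ∈ 𝔉, F.n = n ∧ F.edges.card = k} := by
  refine ⟨n.choose r, ?_⟩
  rintro k ⟨F, _, hFn, rfl⟩
  exact hFn ▸ edges_card_le F

private lemma mFam_le (𝔉 : Set (RGraph r)) (n : ℕ) : mFam 𝔉 n ≤ n.choose r := by
  apply csSup_le'
  rintro k ⟨F, _, hFn, rfl⟩
  exact hFn ▸ edges_card_le F

private lemma le_mFam {𝔉 : Set (RGraph r)} {F : RGraph r} (hF : F ∈ 𝔉) :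
    F.edges.card ≤ mFam 𝔉 F.n :=
  le_csSup (mFam_bdd 𝔉 F.n) ⟨F, hF, rfl, rfl⟩

private lemma mFam_zero (𝔉 : Set (RGraph r)) (hr : 1 ≤ r) : mFam 𝔉 0 = 0 := by
  have h := mFam_le 𝔉 0
  rwa [Nat.choose_eq_zero_of_lt hr, Nat.le_zero] at h


private lemma clone_one {𝔉 : Set (RGraph r)} (hc : Clonable 𝔉) {F : RGraph r} (hF : F ∈ 𝔉)
    {v : ℕ} (hv : v < F.n) :
    ∃ G : RGraph r, G ∈ 𝔉 ∧ G.n = F.n + 1 ∧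
      F.edges.card + (link F v).card ≤ G.edges.card ∧ link F v ⊆ link G v := by
  classical
  set n := F.n with hn
  set φ : ℕ → ℕ := fun w => if w = n then v else w with hφ
  have hφlt : ∀ w, w < n → φ w = w := by
    intro w hw; simp only [hφ]; rw [if_neg (by omega)]
  have hmem : ∀ e ∈ F.edges, ∀ w ∈ e, w < n := F.valid
  set G : RGraph r := ⟨n + 1,
    (Finset.range (n+1)).powerset.filter
      (fun e => Set.InjOn φ ↑e ∧ e.image φ ∈ F.edges),
    by
      intro e he
      simp only [Finset.mem_filter] at he
      rw [← Finset.card_image_of_injOn he.2.1]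
      exact F.uniform _ he.2.2,
    by
      intro e he w hw
      simp only [Finset.mem_filter, Finset.mem_powerset] at he
      exact Finset.mem_range.1 (he.1 hw)⟩ with hG
  have hGedges : ∀ e : Finset ℕ, e ∈ G.edges ↔
      ((∀ w ∈ e, w < n + 1) ∧ Set.InjOn φ ↑e ∧ e.image φ ∈ F.edges) := by
    intro e
    simp only [hG, Finset.mem_filter, Finset.mem_powerset, Finset.subset_iff, Finset.mem_range]
  have hblow : IsBlowup F G := by
    refine ⟨φ, ?_, ?_⟩
    · intro w hw
      have hw' : w < n + 1 := hw
      by_cases h : w = n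
      · simpa [hφ, h] using hv
      · simp only [hφ, if_neg h]; omega
    · intro e; exact hGedges e
  have hold : F.edges ⊆ G.edges := by
    intro f hf
    rw [hGedges]
    have hlt : ∀ w ∈ f, w < n := hmem f hf
    have himg : f.image φ = f := by
      rw [Finset.image_congr (g := id) (fun w hw => hφlt w (hlt w hw)), Finset.image_id]
    refine ⟨fun w hw => by have := hlt w hw; omega, ?_, by rw [himg]; exact hf⟩
    intro a ha b hb hab
    rwa [hφlt a (hlt a ha), hφlt b (hlt b hb)] at hab
  set Nw : Finset (Finset ℕ) := (F.edges.filter fun e => v ∈ e).image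
      (fun f => insert n (f.erase v)) with hNw
  have hnew : Nw ⊆ G.edges := by
    intro e he
    simp only [hNw, Finset.mem_image, Finset.mem_filter] at he
    obtain ⟨f, ⟨hf, hvf⟩, rfl⟩ := he
    have hlt : ∀ w ∈ f, w < n := hmem f hf
    have hcase : ∀ w, w ∈ f.erase v → φ w = w := fun w hw =>
      hφlt w (hlt w (Finset.mem_of_mem_erase hw))
    rw [hGedges]
    refine ⟨?_, ?_, ?_⟩
    · intro w hw
      rcases Finset.mem_insert.1 hw with rfl | hw
      · omega
      · have := hlt w (Finset.mem_of_mem_erase hw); omega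
    · intro a ha b hb hab
      simp only [Finset.coe_insert, Set.mem_insert_iff, Finset.mem_coe] at ha hb
      rcases ha with rfl | ha <;> rcases hb with rfl | hb
      · rfl
      · rw [hcase b hb] at hab
        have hv2 : v = b := by simpa [hφ] using hab
        rw [← hv2] at hb
        exact absurd hb (Finset.notMem_erase v f)
      · rw [hcase a ha] at hab
        have hv2 : v = a := by simpa [hφ] using hab.symm
        rw [← hv2] at ha
        exact absurd ha (Finset.notMem_erase v f)
      · rwa [hcase a ha, hcase b hb] at hab
    · have himg : (insert n (f.erase v)).image φ = f := by
        rw [Finset.image_insert]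
        have h1 : (f.erase v).image φ = f.erase v := by
          rw [Finset.image_congr (g := id) (fun w hw => hcase w hw), Finset.image_id]
        rw [h1]
        have h2 : φ n = v := by simp [hφ]
        rw [h2]
        exact Finset.insert_erase hvf
      rw [himg]; exact hf
  have hdisj : Disjoint F.edges Nw := by
    rw [Finset.disjoint_left]
    intro e he heNw
    simp only [hNw, Finset.mem_image] at heNw
    obtain ⟨f, _, rfl⟩ := heNw
    exact absurd (hmem _ he n (Finset.mem_insert_self n _)) (lt_irrefl n)
  have hNcard : Nw.card = (link F v).card := by
    rw [hNw, linkCard_eq]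
    apply Finset.card_image_of_injOn
    intro f hf f' hf' h
    simp only [Finset.mem_coe, Finset.mem_filter] at hf hf'
    have h' : insert n (f.erase v) = insert n (f'.erase v) := h
    have hn1 : n ∉ f.erase v := fun hx =>
      absurd (hmem f hf.1 n (Finset.mem_of_mem_erase hx)) (lt_irrefl n)
    have hn2 : n ∉ f'.erase v := fun hx =>
      absurd (hmem f' hf'.1 n (Finset.mem_of_mem_erase hx)) (lt_irrefl n)
    have h1 : f.erase v = f'.erase v := by
      have := congrArg (fun s => Finset.erase s n) h'
      simpa [Finset.erase_insert hn1, Finset.erase_insert hn2] using this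
    rw [← Finset.insert_erase hf.2, h1, Finset.insert_erase hf'.2]
  have hcard : F.edges.card + (link F v).card ≤ G.edges.card := by
    rw [← hNcard, ← Finset.card_union_of_disjoint hdisj]
    exact Finset.card_le_card (Finset.union_subset hold hnew)
  have hlink : link F v ⊆ link G v :=
    Finset.image_subset_image (Finset.filter_subset_filter _ hold)
  exact ⟨G, hc F hF G hblow, rfl, hcard, hlink⟩

private lemma clone_many {𝔉 : Set (RGraph r)} (hc : Clonable 𝔉) {F : RGraph r} (hF : F ∈ 𝔉)
    {v : ℕ} (hv : v < F.n) (s : ℕ) :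
    ∃ G : RGraph r, G ∈ 𝔉 ∧ G.n = F.n + s ∧
      F.edges.card + s * (link F v).card ≤ G.edges.card := by
  have main : ∀ s : ℕ, ∃ G : RGraph r, G ∈ 𝔉 ∧ G.n = F.n + s ∧
      F.edges.card + s * (link F v).card ≤ G.edges.card ∧
      (link F v).card ≤ (link G v).card := by
    intro s
    induction s with
    | zero => exact ⟨F, hF, rfl, by simp, le_rfl⟩
    | succ s ih =>
      obtain ⟨G, hG, hGn, hGcard, hGlink⟩ := ih
      have hvG : v < G.n := by omega
      obtain ⟨H, hH, hHn, hHcard, hHlink⟩ := clone_one hc hG hvG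
      refine ⟨H, hH, by omega, ?_, le_trans hGlink (Finset.card_le_card hHlink)⟩
      calc F.edges.card + (s+1) * (link F v).card
          = (F.edges.card + s * (link F v).card) + (link F v).card := by ring
        _ ≤ G.edges.card + (link G v).card := Nat.add_le_add hGcard hGlink
        _ ≤ H.edges.card := hHcard
  obtain ⟨G, hG, hGn, hGcard, _⟩ := main s
  exact ⟨G, hG, hGn, hGcard⟩

private lemma mFam_rec {𝔉 : Set (RGraph r)} (hc : Clonable 𝔉) (hr : 1 ≤ r) {n : ℕ}
    (hn : 1 ≤ n) : (n + r) * mFam 𝔉 n ≤ n * mFam 𝔉 (n + 1) := by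
  by_cases h0 : mFam 𝔉 n = 0
  · simp [h0]
  have hne : {k | ∃ F ∈ 𝔉, F.n = n ∧ F.edges.card = k}.Nonempty := by
    rcases Set.eq_empty_or_nonempty {k | ∃ F ∈ 𝔉, F.n = n ∧ F.edges.card = k} with h | h
    · exact absurd (by simp [mFam, h]) h0
    · exact h
  have hmem : mFam 𝔉 n ∈ {k | ∃ F ∈ 𝔉, F.n = n ∧ F.edges.card = k} :=
    Nat.sSup_mem hne (mFam_bdd 𝔉 n)
  obtain ⟨F, hF, hFn, hFcard⟩ := hmem
  have hsum : ∑ v ∈ Finset.range n, (link F v).card = r * F.edges.card := by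
    rw [← hFn]; exact sum_linkCard F
  have hex : ∃ v ∈ Finset.range n, r * F.edges.card ≤ n * (link F v).card := by
    by_contra h
    push_neg at h
    have hlt : ∀ v ∈ Finset.range n, n * (link F v).card + 1 ≤ r * F.edges.card :=
      fun v hv => h v hv
    have hs := Finset.sum_le_sum hlt
    rw [Finset.sum_add_distrib, ← Finset.mul_sum, hsum, Finset.sum_const, Finset.card_range,
      smul_eq_mul, mul_one, Finset.sum_const, Finset.card_range, smul_eq_mul] at hs
    have hpos : 1 ≤ r * F.edges.card := by
      rcases Nat.eq_zero_or_pos (r * F.edges.card) with h' | h'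
      · exfalso
        rcases Nat.mul_eq_zero.1 h' with h'' | h''
        · omega
        · rw [h''] at hFcard; omega
      · omega
    nlinarith
  obtain ⟨w, hwmem, hwdeg⟩ := hex
  have hw : w < F.n := hFn ▸ Finset.mem_range.1 hwmem
  obtain ⟨G, hG, hGn, hGcard⟩ := clone_many hc hF hw 1
  have h1 : G.edges.card ≤ mFam 𝔉 (n + 1) := by
    have h2 := le_mFam hG
    rwa [hGn, hFn] at h2
  calc (n + r) * mFam 𝔉 n = n * F.edges.card + r * F.edges.card := by rw [← hFcard]; ring
    _ ≤ n * F.edges.card + n * (link F w).card := by omega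
    _ = n * (F.edges.card + 1 * (link F w).card) := by ring
    _ ≤ n * G.edges.card := Nat.mul_le_mul_left n hGcard
    _ ≤ n * mFam 𝔉 (n + 1) := Nat.mul_le_mul_left n h1


private def ascF (r n : ℕ) : ℕ := ∏ i ∈ Finset.range r, (n + i)

private lemma ascF_pos {n : ℕ} (hn : 1 ≤ n) (r : ℕ) : 0 < ascF r n :=
  Finset.prod_pos fun i _ => by omega

private lemma ascF_shift (r n : ℕ) : n * ascF r (n + 1) = ascF r n * (n + r) := by
  have h1 : ∏ i ∈ Finset.range (r+1), (n + i)
      = (∏ i ∈ Finset.range r, (n + (i+1))) * (n + 0) := Finset.prod_range_succ' _ r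
  have h2 : ∏ i ∈ Finset.range (r+1), (n + i)
      = (∏ i ∈ Finset.range r, (n + i)) * (n + r) := Finset.prod_range_succ _ r
  have h3 : ascF r (n+1) = ∏ i ∈ Finset.range r, (n + (i+1)) :=
    Finset.prod_congr rfl fun i _ => by omega
  calc n * ascF r (n+1) = (∏ i ∈ Finset.range r, (n + (i+1))) * (n + 0) := by rw [h3]; ring
    _ = ascF r n * (n + r) := by rw [← h1, h2]; rfl

private lemma mDen_spec {𝔉 : Set (RGraph r)} (hc : Clonable 𝔉) (hr : 1 ≤ r) :
    0 ≤ mDen 𝔉 ∧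
      Tendsto (fun n : ℕ => (mFam 𝔉 n : ℝ) / (n : ℝ) ^ r) atTop (nhds (mDen 𝔉)) := by
  classical
  set b : ℕ → ℝ := fun n => (mFam 𝔉 n : ℝ) / (ascF r n : ℝ) with hb
  have hb0 : ∀ n, 0 ≤ b n := fun n => by
    rw [hb]; positivity
  have hb_mono : Monotone b := by
    apply monotone_nat_of_le_succ
    intro n
    rcases Nat.eq_zero_or_pos n with rfl | hn
    · simp only [hb, mFam_zero 𝔉 hr, Nat.cast_zero, zero_div]
      exact hb0 1
    · have hkey := mFam_rec hc hr hn
      have ha1 : (0:ℝ) < (ascF r n : ℝ) := by exact_mod_cast ascF_pos hn r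
      have ha2 : (0:ℝ) < (ascF r (n+1) : ℝ) := by exact_mod_cast ascF_pos (by omega) r
      simp only [hb]
      rw [div_le_div_iff₀ ha1 ha2]
      have hnat : mFam 𝔉 n * ascF r (n+1) ≤ mFam 𝔉 (n+1) * ascF r n := by
        have h3 : n * (mFam 𝔉 n * ascF r (n+1)) = ((n+r) * mFam 𝔉 n) * ascF r n := by
          calc n * (mFam 𝔉 n * ascF r (n+1)) = mFam 𝔉 n * (n * ascF r (n+1)) := by ring
            _ = mFam 𝔉 n * (ascF r n * (n+r)) := by rw [ascF_shift]
            _ = ((n+r) * mFam 𝔉 n) * ascF r n := by ring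
        have h5 : n * (mFam 𝔉 n * ascF r (n+1)) ≤ n * (mFam 𝔉 (n+1) * ascF r n) := by
          rw [h3]
          calc ((n+r) * mFam 𝔉 n) * ascF r n ≤ (n * mFam 𝔉 (n+1)) * ascF r n :=
              Nat.mul_le_mul_right _ hkey
            _ = n * (mFam 𝔉 (n+1) * ascF r n) := by ring
        exact Nat.le_of_mul_le_mul_left h5 hn
      exact_mod_cast hnat
  have hb_bdd : BddAbove (Set.range b) := by
    refine ⟨1, ?_⟩
    rintro x ⟨n, rfl⟩
    rcases Nat.eq_zero_or_pos n with rfl | hn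
    · simp [hb, mFam_zero 𝔉 hr]
    · have h1 : mFam 𝔉 n ≤ ascF r n := by
        refine le_trans (le_trans (mFam_le 𝔉 n) (Nat.choose_le_pow n r)) ?_
        calc n ^ r = ∏ _i ∈ Finset.range r, n := by
              rw [Finset.prod_const, Finset.card_range]
          _ ≤ ascF r n := Finset.prod_le_prod' fun i _ => Nat.le_add_right n i
      have ha1 : (0:ℝ) < (ascF r n : ℝ) := by exact_mod_cast ascF_pos hn r
      rw [hb]
      rw [div_le_one ha1]
      exact_mod_cast h1
  have hbT : Tendsto b atTop (nhds (⨆ n, b n)) := tendsto_atTop_ciSup hb_mono hb_bdd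
  have hcT : Tendsto (fun n : ℕ => (ascF r n : ℝ) / (n : ℝ) ^ r) atTop (nhds 1) := by
    have heq : ∀ᶠ n : ℕ in atTop,
        (∏ i ∈ Finset.range r, (1 + (i:ℝ)/(n:ℝ))) = (ascF r n : ℝ) / (n : ℝ) ^ r := by
      filter_upwards [eventually_ge_atTop 1] with n hn
      have hn0 : (n:ℝ) ≠ 0 := by
        have : (0:ℝ) < (n:ℝ) := by exact_mod_cast hn
        exact this.ne'
      have h1 : (ascF r n : ℝ) = ∏ i ∈ Finset.range r, ((n:ℝ) + (i:ℝ)) := by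
        rw [ascF]; push_cast; rfl
      have h2 : (n:ℝ) ^ r = ∏ _i ∈ Finset.range r, (n:ℝ) := by
        rw [Finset.prod_const, Finset.card_range]
      rw [h1, h2, ← Finset.prod_div_distrib]
      exact Finset.prod_congr rfl fun i _ => by field_simp
    have hlim : Tendsto (fun n : ℕ => ∏ i ∈ Finset.range r, (1 + (i:ℝ)/(n:ℝ))) atTop
        (nhds (∏ _i ∈ Finset.range r, (1:ℝ))) := by
      apply tendsto_finset_prod
      intro i _
      have h3 : Tendsto (fun n : ℕ => (i:ℝ)/(n:ℝ)) atTop (nhds 0) :=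
        Tendsto.div_atTop tendsto_const_nhds tendsto_natCast_atTop_atTop
      simpa using tendsto_const_nhds.add h3
    rw [Finset.prod_const_one] at hlim
    exact hlim.congr' heq
  have habT : Tendsto (fun n : ℕ => (mFam 𝔉 n : ℝ) / (n : ℝ) ^ r) atTop
      (nhds (⨆ n, b n)) := by
    have h1 := hbT.mul hcT
    rw [mul_one] at h1
    refine h1.congr' ?_
    filter_upwards [eventually_ge_atTop 1] with n hn
    have hn0 : (n:ℝ) ≠ 0 := by
      have : (0:ℝ) < (n:ℝ) := by exact_mod_cast hn
      exact this.ne'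
    have ha1 : (ascF r n : ℝ) ≠ 0 := by
      have : (0:ℝ) < (ascF r n : ℝ) := by exact_mod_cast ascF_pos hn r
      exact this.ne'
    simp only [hb]
    field_simp
  have hlim : mDen 𝔉 = ⨆ n, b n := habT.limUnder_eq
  constructor
  · rw [hlim]
    exact le_trans (hb0 1) (le_ciSup hb_bdd 1)
  · rw [hlim]; exact habT


private lemma one_add_pow_le {x : ℝ} (hx0 : 0 ≤ x) (hx1 : x ≤ 1) (k : ℕ) :
    (1 + x) ^ k ≤ 1 + 2 ^ k * x := by
  have key : ∀ m : ℕ, (1 + x) ^ m ≤ 1 + (2 ^ m - 1) * x := by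
    intro m
    induction m with
    | zero => norm_num
    | succ m ih =>
      have h2 : (0:ℝ) ≤ (2:ℝ) ^ m - 1 := by
        have h3 : (1:ℝ)^m ≤ 2 ^ m := pow_le_pow_left₀ (by norm_num) (by norm_num) m
        rw [one_pow] at h3
        linarith
      calc (1+x)^(m+1) = (1+x)^m * (1+x) := by ring
        _ ≤ (1 + (2^m - 1)*x) * (1+x) := by nlinarith
        _ = 1 + (2^(m+1) - 1)*x + ((2^m - 1)*x*x - (2^m)*x + x) := by ring
        _ ≤ 1 + (2^(m+1) - 1)*x := by
            nlinarith [mul_nonneg (mul_nonneg h2 hx0) (sub_nonneg.2 hx1)]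
  have h := key k
  have h1 : (1:ℝ)^k ≤ 2 ^ k := pow_le_pow_left₀ (by norm_num) (by norm_num) k
  rw [one_pow] at h1
  nlinarith

private lemma pow_sub_pow_le {a b : ℝ} (hb : 0 ≤ b) (hab : b ≤ a) (k : ℕ) :
    a ^ (k+1) - b ^ (k+1) ≤ ((k:ℝ)+1) * (a - b) * a ^ k := by
  induction k with
  | zero => norm_num
  | succ k ih =>
    have ha : 0 ≤ a := le_trans hb hab
    have hpow : b ^ (k+1) ≤ a ^ (k+1) := pow_le_pow_left₀ hb hab _
    have hak : (0:ℝ) ≤ a ^ k := pow_nonneg ha k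
    calc a^(k+2) - b^(k+2) = a * (a^(k+1) - b^(k+1)) + (a - b) * b^(k+1) := by ring
      _ ≤ a * (((k:ℝ)+1) * (a-b) * a^k) + (a-b) * a^(k+1) := by nlinarith
      _ = (((k:ℝ)+1+1) * (a-b)) * a^(k+1) := by ring
      _ = ((((k:ℕ)+1:ℕ):ℝ)+1) * (a-b) * a^(k+1) := by push_cast; ring

set_option maxHeartbeats 1000000

/-- degree lemma. For a clonable family `𝔉` and every `ε > 0` there are `δ > 0`
and `n0` such that every `F ∈ 𝔉` on `n ≥ n0` vertices with at least `(m(𝔉) - δ) n^r` edges has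
a set `X` of at least `(1 - ε)n` vertices all of whose links have size within `ε n^{r-1}` of
`r·m(𝔉)·n^{r-1}`. -/
theorem degree_lemma {r : ℕ} (𝔉 : Set (RGraph r)) (hc : Clonable 𝔉) :
    ∀ ε > (0 : ℝ), ∃ δ > (0 : ℝ), ∃ n0 : ℕ, ∀ F ∈ 𝔉, n0 ≤ F.n →
      (mDen 𝔉 - δ) * (F.n : ℝ) ^ r ≤ (F.edges.card : ℝ) →
      ∃ X : Finset ℕ, X ⊆ Finset.range F.n ∧ (1 - ε) * (F.n : ℝ) ≤ (X.card : ℝ) ∧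
        ∀ v ∈ X,
          |((link F v).card : ℝ) - (r : ℝ) * mDen 𝔉 * (F.n : ℝ) ^ (r - 1)| ≤
            ε * (F.n : ℝ) ^ (r - 1) := by
  classical
  intro ε hε
  obtain _ | R := r
  · -- r = 0 : links are empty
    refine ⟨1, one_pos, 0, fun F hF _ _ => ?_⟩
    refine ⟨Finset.range F.n, Finset.Subset.refl _, ?_, ?_⟩
    · rw [Finset.card_range]
      nlinarith [show (0:ℝ) ≤ (F.n:ℝ) from Nat.cast_nonneg F.n]
    · intro v _
      have hlink : (link F v).card = 0 := by
        rw [linkCard_eq, Finset.card_eq_zero, Finset.filter_eq_empty_iff]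
        intro e he hv
        have h0 := F.uniform e he
        rw [Finset.card_eq_zero] at h0
        exact absurd (h0 ▸ hv) (Finset.notMem_empty v)
      rw [hlink]
      simp only [Nat.cast_zero, Nat.cast_ofNat, CharP.cast_eq_zero, zero_mul, sub_zero,
        abs_zero, pow_zero]
      positivity
  · -- r = R + 1
    have hr : 1 ≤ R + 1 := Nat.le_add_left 1 R
    obtain ⟨hlam0, hT⟩ := mDen_spec hc hr
    set lam := mDen 𝔉 with hlamdef
    clear_value lam
    set ε₁ : ℝ := min ε 1 with hε₁def
    have hε₁0 : 0 < ε₁ := lt_min hε one_pos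
    have hε₁1 : ε₁ ≤ 1 := min_le_right _ _
    have hε₁ε : ε₁ ≤ ε := min_le_left _ _
    clear_value ε₁
    set η : ℝ := ε₁^2/4 with hηdef
    have hη0 : 0 < η := by rw [hηdef]; exact div_pos (pow_pos hε₁0 2) (by norm_num)
    have hη1 : η ≤ 1 := by rw [hηdef]; nlinarith
    have hηε₁ : η ≤ ε₁ := by rw [hηdef]; nlinarith
    clear_value η
    have hpow2 : (0:ℝ) < 2^(R+2) := by positivity
    have hpow1 : (0:ℝ) < 2^(R+1) := by positivity
    have hR1 : (0:ℝ) < (R:ℝ) + 1 := by positivity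
    have hcR : (0:ℝ) ≤ (R:ℝ) := Nat.cast_nonneg R
    set θ : ℝ := η / (4 * (lam + 1) * ((R:ℝ)+1) * 2^(R+2)) with hθdef
    have hden : (0:ℝ) < 4 * (lam + 1) * ((R:ℝ)+1) * 2^(R+2) :=
      mul_pos (mul_pos (by linarith : (0:ℝ) < 4 * (lam + 1)) hR1) hpow2
    have hθ0 : 0 < θ := by rw [hθdef]; exact div_pos hη0 hden
    have hθ2 : 2^(R+2) * θ ≤ 1 := by
      rw [hθdef, mul_div_assoc']
      rw [div_le_one hden]
      nlinarith [mul_le_mul_of_nonneg_left hη1 hpow2.le, mul_nonneg hpow2.le hlam0,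
        mul_nonneg (mul_nonneg hpow2.le hlam0) hcR, mul_nonneg hpow2.le hcR]
    have hθhalf : 2 * θ ≤ 1 := by
      have h4 : (2:ℝ) ≤ 2^(R+2) := by
        calc (2:ℝ) = 2^1 := (pow_one 2).symm
          _ ≤ 2^(R+2) := pow_le_pow_right₀ one_le_two (by omega)
      nlinarith [hθ0.le]
    have hθ1 : θ ≤ 1 := by linarith
    have hθkey : lam * ((R:ℝ)+1) * 2^(R+1) * θ ≤ η/4 := by
      rw [hθdef, mul_div_assoc']
      rw [div_le_div_iff₀ hden (by norm_num : (0:ℝ) < 4)]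
      have hp : (2:ℝ)^(R+2) = 2 * 2^(R+1) := by rw [pow_succ]; ring
      rw [hp]
      nlinarith [mul_nonneg (mul_nonneg hη0.le hpow1.le) hR1.le,
        mul_nonneg (mul_nonneg (mul_nonneg hη0.le hpow1.le) hR1.le) hlam0]
    clear_value θ
    set δ : ℝ := η * θ / (4 * ((R:ℝ)+1)) with hδdef
    have hδ0 : 0 < δ := by
      rw [hδdef]
      exact div_pos (mul_pos hη0 hθ0) (by positivity)
    have hδeq : δ * (4*((R:ℝ)+1)) = η * θ := by
      rw [hδdef]; field_simp
    clear_value δ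
    have hδθ : 3 * δ ≤ 3*η/4 * θ := by
      nlinarith [hδeq, mul_nonneg hδ0.le hcR]
    have hδη : ((R:ℝ)+1) * δ ≤ η := by
      nlinarith [hδeq, mul_nonneg hη0.le (by linarith : (0:ℝ) ≤ 1 - θ)]
    have hev : ∀ᶠ m : ℕ in atTop, (mFam 𝔉 m : ℝ)/(m:ℝ)^(R+1) ≤ lam + δ :=
      hT.eventually (eventually_le_nhds (by linarith))
    obtain ⟨n₁, hn₁⟩ := eventually_atTop.1 hev
    refine ⟨δ, hδ0, max (max n₁ 1) (⌈1/θ⌉₊ + 1), ?_⟩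
    intro F hF hFn hE
    set n := F.n with hn
    have hnN1 : n₁ ≤ n := le_trans (le_trans (le_max_left _ _) (le_max_left _ _)) hFn
    have hn1 : 1 ≤ n := le_trans (le_trans (le_max_right _ _) (le_max_left _ _)) hFn
    have hnθ : ⌈1/θ⌉₊ + 1 ≤ n := le_trans (le_max_right _ _) hFn
    have hB0 : (0:ℝ) < (n:ℝ) := by exact_mod_cast hn1
    have hθn : 1 ≤ θ * (n:ℝ) := by
      have h1 : 1/θ ≤ (n:ℝ) := by
        have h2 := Nat.le_ceil (1/θ)
        have h3 : ((⌈1/θ⌉₊ : ℕ):ℝ) + 1 ≤ (n:ℝ) := by exact_mod_cast hnθ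
        linarith
      rw [div_le_iff₀ hθ0] at h1
      linarith [h1]
    have hbound : ∀ m : ℕ, n ≤ m → (mFam 𝔉 m : ℝ) ≤ (lam + δ) * (m:ℝ)^(R+1) := by
      intro m hm
      have h1 := hn₁ m (le_trans hnN1 hm)
      have hm1 : (0:ℝ) < (m:ℝ) := by
        have h2 : 1 ≤ m := le_trans hn1 hm
        exact_mod_cast h2
      exact (div_le_iff₀ (pow_pos hm1 (R+1))).1 h1
    have hnR : (0:ℝ) < (n:ℝ)^R := pow_pos hB0 R
    -- global upper bound on degrees
    have hub : ∀ v, v < n → ((link F v).card : ℝ) ≤ (((R:ℝ)+1) * lam + η) * (n:ℝ)^R := by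
      intro v hv
      set s : ℕ := ⌈θ * (n:ℝ)⌉₊ with hs
      have hs1 : θ * (n:ℝ) ≤ (s:ℝ) := by rw [hs]; exact Nat.le_ceil _
      have hs0 : (0:ℝ) < (s:ℝ) := by linarith
      have hs2 : (s:ℝ) ≤ 2 * (θ * (n:ℝ)) := by
        have h1 : ((⌈θ*(n:ℝ)⌉₊:ℕ):ℝ) < θ*(n:ℝ) + 1 :=
          Nat.ceil_lt_add_one (mul_nonneg hθ0.le hB0.le)
        rw [← hs] at h1
        linarith
      clear_value s
      have hvF : v < F.n := by rw [← hn]; exact hv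
      obtain ⟨G, hG, hGn, hGcard⟩ := clone_many hc hF hvF s
      set A : ℝ := (n:ℝ) + (s:ℝ) with hA
      have hABle : (n:ℝ) ≤ A := by rw [hA]; linarith
      have hApos : (0:ℝ) ≤ A := by linarith
      have hmG : (G.edges.card : ℝ) ≤ (lam + δ) * A ^ (R+1) := by
        have h1 : (G.edges.card : ℝ) ≤ (mFam 𝔉 G.n : ℝ) := by exact_mod_cast le_mFam hG
        have h2 := hbound (n + s) (Nat.le_add_right n s)
        rw [hGn, ← hn] at h1
        have h3 : ((n + s : ℕ):ℝ) = A := by rw [hA]; push_cast; ring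
        calc (G.edges.card:ℝ) ≤ _ := h1
          _ ≤ (lam+δ) * ((n+s:ℕ):ℝ)^(R+1) := h2
          _ = (lam+δ) * A^(R+1) := by rw [h3]
      clear_value A
      have hkey : (s:ℝ) * ((link F v).card:ℝ) ≤
          lam * (A^(R+1) - (n:ℝ)^(R+1)) + δ*A^(R+1) + δ*(n:ℝ)^(R+1) := by
        have h4 : (F.edges.card:ℝ) + (s:ℝ)*((link F v).card:ℝ) ≤ (G.edges.card:ℝ) := by
          exact_mod_cast hGcard
        have h5 : (lam - δ) * (n:ℝ)^(R+1) ≤ (F.edges.card:ℝ) := hE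
        have h6 : lam*(A^(R+1) - (n:ℝ)^(R+1)) + δ*A^(R+1) + δ*(n:ℝ)^(R+1)
            = (lam+δ)*A^(R+1) - (lam-δ)*(n:ℝ)^(R+1) := by ring
        linarith
      have hd1 : A^(R+1) - (n:ℝ)^(R+1) ≤ ((R:ℝ)+1) * (s:ℝ) * A^R := by
        have h7 := pow_sub_pow_le (le_of_lt hB0) hABle R
        have hABs : A - (n:ℝ) = (s:ℝ) := by rw [hA]; ring
        rw [hABs] at h7
        linarith
      have hAB2 : A ≤ (1 + 2*θ) * (n:ℝ) := by rw [hA]; linarith [hs2]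
      have hARle : A^R ≤ (1 + 2^R * (2*θ)) * (n:ℝ)^R := by
        calc A^R ≤ ((1+2*θ)*(n:ℝ))^R := pow_le_pow_left₀ hApos hAB2 R
          _ = (1+2*θ)^R * (n:ℝ)^R := mul_pow _ _ _
          _ ≤ (1 + 2^R*(2*θ)) * (n:ℝ)^R :=
              mul_le_mul_of_nonneg_right
                (one_add_pow_le (by linarith : (0:ℝ) ≤ 2*θ) hθhalf R)
                (pow_nonneg hB0.le R)
      have hAR1le : A^(R+1) ≤ 2 * (n:ℝ)^(R+1) := by
        calc A^(R+1) ≤ ((1+2*θ)*(n:ℝ))^(R+1) := pow_le_pow_left₀ hApos hAB2 (R+1)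
          _ = (1+2*θ)^(R+1) * (n:ℝ)^(R+1) := mul_pow _ _ _
          _ ≤ 2 * (n:ℝ)^(R+1) := by
              have h6 := one_add_pow_le (by linarith : (0:ℝ) ≤ 2*θ) hθhalf (R+1)
              have h7 : (2:ℝ)^(R+1)*(2*θ) = 2^(R+2)*θ := by rw [pow_succ 2 (R+1)]; ring
              have h8 : (1+2*θ)^(R+1) ≤ 2 := by rw [h7] at h6; linarith
              exact mul_le_mul_of_nonneg_right h8 (pow_nonneg hB0.le (R+1))
      have hfinal : (s:ℝ) * ((link F v).card:ℝ) ≤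
          (s:ℝ) * ((((R:ℝ)+1)*lam + η) * (n:ℝ)^R) := by
        have t1 : lam * (A^(R+1) - (n:ℝ)^(R+1)) ≤ lam * (((R:ℝ)+1) * (s:ℝ) * A^R) :=
          mul_le_mul_of_nonneg_left hd1 hlam0
        have t2 : lam * (((R:ℝ)+1) * (s:ℝ) * A^R)
            ≤ lam*((R:ℝ)+1)*(s:ℝ)*((1 + 2^R*(2*θ))*(n:ℝ)^R) := by
          have h9 := mul_le_mul_of_nonneg_left hARle
            (mul_nonneg (mul_nonneg hlam0 hR1.le) hs0.le)
          have e1 : lam * (((R:ℝ)+1) * (s:ℝ) * A^R)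
              = lam*((R:ℝ)+1)*(s:ℝ) * A^R := by ring
          have e2 : lam*((R:ℝ)+1)*(s:ℝ)*((1 + 2^R*(2*θ))*(n:ℝ)^R)
              = lam*((R:ℝ)+1)*(s:ℝ) * ((1 + 2^R*(2*θ))*(n:ℝ)^R) := by ring
          rw [e1, e2]
          exact h9
        have t3 : lam*((R:ℝ)+1)*(s:ℝ)*((1 + 2^R*(2*θ))*(n:ℝ)^R)
            = lam*((R:ℝ)+1)*(s:ℝ)*(n:ℝ)^R + (lam*((R:ℝ)+1)*2^(R+1)*θ)*((s:ℝ)*(n:ℝ)^R) := by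
          rw [pow_succ 2 R]; ring
        have t4 : (lam*((R:ℝ)+1)*2^(R+1)*θ)*((s:ℝ)*(n:ℝ)^R) ≤ (η/4)*((s:ℝ)*(n:ℝ)^R) :=
          mul_le_mul_of_nonneg_right hθkey (mul_nonneg hs0.le hnR.le)
        have t5 : δ*A^(R+1) + δ*(n:ℝ)^(R+1) ≤ 3*δ*(n:ℝ)^(R+1) := by
          have h9 := mul_le_mul_of_nonneg_left hAR1le hδ0.le
          linarith [h9]
        have t6 : 3*δ*(n:ℝ)^(R+1) ≤ (3*η/4)*((s:ℝ)*(n:ℝ)^R) := by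
          have h9 : (n:ℝ)^(R+1) = (n:ℝ)*(n:ℝ)^R := by rw [pow_succ]; ring
          rw [h9]
          have h10 : 3*δ*(n:ℝ) ≤ (3*η/4)*(θ*(n:ℝ)) := by
            have := mul_le_mul_of_nonneg_right hδθ hB0.le
            linarith [this]
          have h11 : (3*η/4)*(θ*(n:ℝ)) ≤ (3*η/4)*(s:ℝ) :=
            mul_le_mul_of_nonneg_left hs1 (by linarith : (0:ℝ) ≤ 3*η/4)
          have h12 := mul_le_mul_of_nonneg_right (le_trans h10 h11) hnR.le
          linarith [h12]
        calc (s:ℝ) * ((link F v).card:ℝ)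
            ≤ lam*(A^(R+1) - (n:ℝ)^(R+1)) + δ*A^(R+1) + δ*(n:ℝ)^(R+1) := hkey
          _ ≤ (lam*((R:ℝ)+1)*(s:ℝ)*(n:ℝ)^R + (η/4)*((s:ℝ)*(n:ℝ)^R))
              + (3*η/4)*((s:ℝ)*(n:ℝ)^R) := by linarith [t1, t2, t3.le, t3.ge, t4, t5, t6]
          _ = (s:ℝ)*((((R:ℝ)+1)*lam + η)*(n:ℝ)^R) := by ring
      exact le_of_mul_le_mul_left hfinal hs0
    -- the set X of vertices of large degree
    set X := (Finset.range n).filter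
        (fun v => (((R:ℝ)+1)*lam - ε₁) * (n:ℝ)^R ≤ ((link F v).card:ℝ)) with hX
    have hXsub : X ⊆ Finset.range n := by rw [hX]; exact Finset.filter_subset _ _
    set Y := (Finset.range n).filter
        (fun v => ¬ ((((R:ℝ)+1)*lam - ε₁) * (n:ℝ)^R ≤ ((link F v).card:ℝ))) with hY
    have hcards : X.card + Y.card = n := by
      rw [hX, hY, Finset.card_filter_add_card_filter_not, Finset.card_range]
    have hXY : (X.card:ℝ) + (Y.card:ℝ) = (n:ℝ) := by exact_mod_cast hcards
    have hsum : ∑ v ∈ Finset.range n, ((link F v).card:ℝ)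
        = ((R:ℝ)+1) * (F.edges.card:ℝ) := by
      have h1 := sum_linkCard F
      rw [← hn] at h1
      rw [← Nat.cast_sum, h1]
      push_cast
      ring
    have hXsum : ∑ v ∈ X, ((link F v).card:ℝ)
        ≤ X.card • ((((R:ℝ)+1)*lam + η) * (n:ℝ)^R) :=
      Finset.sum_le_card_nsmul X _ _
        (fun v hv => hub v (Finset.mem_range.1 (hXsub hv)))
    have hYsum : ∑ v ∈ Y, ((link F v).card:ℝ)
        ≤ Y.card • ((((R:ℝ)+1)*lam - ε₁) * (n:ℝ)^R) := by
      refine Finset.sum_le_card_nsmul Y _ _ (fun v hv => ?_)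
      rw [hY] at hv
      have h1 := (Finset.mem_filter.1 hv).2
      exact le_of_lt (not_le.1 h1)
    rw [nsmul_eq_mul] at hXsum hYsum
    have hsplit : ∑ v ∈ X, ((link F v).card:ℝ) + ∑ v ∈ Y, ((link F v).card:ℝ)
        = ∑ v ∈ Finset.range n, ((link F v).card:ℝ) := by
      rw [hX, hY]
      exact Finset.sum_filter_add_sum_filter_not _ _ _
    have hlow : (lam - δ) * (n:ℝ)^(R+1) ≤ (F.edges.card:ℝ) := hE
    have hchain' : (((R:ℝ)+1)*(lam-δ)*(n:ℝ)) * (n:ℝ)^R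
        ≤ ((X.card:ℝ)*(((R:ℝ)+1)*lam + η) + (Y.card:ℝ)*(((R:ℝ)+1)*lam - ε₁)) * (n:ℝ)^R := by
      have hpows : (n:ℝ)^(R+1) = (n:ℝ)*(n:ℝ)^R := by rw [pow_succ]; ring
      calc (((R:ℝ)+1)*(lam-δ)*(n:ℝ)) * (n:ℝ)^R = ((R:ℝ)+1)*((lam-δ)*(n:ℝ)^(R+1)) := by
            rw [hpows]; ring
        _ ≤ ((R:ℝ)+1)*(F.edges.card:ℝ) := mul_le_mul_of_nonneg_left hlow hR1.le
        _ = ∑ v ∈ Finset.range n, ((link F v).card:ℝ) := hsum.symm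
        _ = ∑ v ∈ X, ((link F v).card:ℝ) + ∑ v ∈ Y, ((link F v).card:ℝ) := hsplit.symm
        _ ≤ (X.card:ℝ)*((((R:ℝ)+1)*lam + η) * (n:ℝ)^R)
            + (Y.card:ℝ)*((((R:ℝ)+1)*lam - ε₁) * (n:ℝ)^R) := add_le_add hXsum hYsum
        _ = ((X.card:ℝ)*(((R:ℝ)+1)*lam + η) + (Y.card:ℝ)*(((R:ℝ)+1)*lam - ε₁)) * (n:ℝ)^R := by
            ring
    have hdiv := le_of_mul_le_mul_right hchain' hnR
    have hXc : (X.card:ℝ) = (n:ℝ) - (Y.card:ℝ) := by linarith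
    rw [hXc] at hdiv
    have hYb : (Y.card:ℝ) * ε₁ ≤ (n:ℝ) * (η + ((R:ℝ)+1)*δ) := by
      nlinarith [mul_nonneg hη0.le (show (0:ℝ) ≤ (Y.card:ℝ) from Nat.cast_nonneg Y.card)]
    have hYc : (Y.card:ℝ) ≤ ε₁ * (n:ℝ)/2 := by
      have h12 : η + ((R:ℝ)+1)*δ ≤ ε₁^2/2 := by rw [hηdef] at hδη ⊢; linarith
      have h13 : (Y.card:ℝ) * ε₁ ≤ (ε₁ * (n:ℝ)/2) * ε₁ := by
        nlinarith [mul_le_mul_of_nonneg_left h12 hB0.le]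
      exact le_of_mul_le_mul_right h13 hε₁0
    refine ⟨X, hXsub, ?_, ?_⟩
    · rw [hXc]
      linarith only [hYc, mul_nonneg (by linarith : (0:ℝ) ≤ ε - ε₁) hB0.le,
        mul_nonneg hε₁0.le hB0.le]
    · intro v hvX
      rw [hX] at hvX
      obtain ⟨hvr, hvdeg⟩ := Finset.mem_filter.1 hvX
      have hv : v < n := Finset.mem_range.1 hvr
      have hup := hub v hv
      have hcast : ((R+1:ℕ):ℝ) = (R:ℝ)+1 := by push_cast; ring
      simp only [Nat.add_sub_cancel]
      rw [hcast, abs_le]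
      constructor
      · linarith only [hvdeg, mul_nonneg (by linarith : (0:ℝ) ≤ ε - ε₁) hnR.le]
      · linarith only [hup, mul_nonneg (by linarith : (0:ℝ) ≤ ε - η) hnR.le]
end TuranGT
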